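/- arXiv:2103.06731 — 8 statements merged into one kernel-verified Lean document; each statement's English description precedes it below -/
import Mathlib

section
/- Let d : ℝ → M₄(ℂ) be a self-consistent trajectory and set 𝔷(t) := Tr(d(t)·A↓A↑). Then 𝔷 is differentiable and satisfies the linear ODE 𝔷′(t) = i·(2(μ−λ) + γ·(1 − Tr(d(t)·(n↑+n↓))))·𝔷(t) for every t ∈ ℝ. -/
open Matrix
open scoped ComplexOrder

noncomputable section

/-- `M₄(ℂ)`, the algebra of 4×4 complex matrices, identified with the linear
operators on the one-site fermionic Fock space `ℂ⁴`. -/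
abbrev M4 : Type := Matrix (Fin 4) (Fin 4) ℂ

noncomputable instance : NormedAddCommGroup M4 := Matrix.normedAddCommGroup
noncomputable instance : NormedSpace ℝ M4 := Matrix.normedSpace

/-- The canonical anticommutation relations for the two matrices `A↑ = Aup`,
`A↓ = Adn`: `Aₛ·Aₜ + Aₜ·Aₛ = 0` and `Aₛ·Aₜ* + Aₜ*·Aₛ = δ_{s,t}·1` for
`s, t ∈ {↑,↓}`. -/
def CAR (Aup Adn : M4) : Prop :=
  Aup * Aup + Aup * Aup = 0 ∧
  Aup * Adn + Adn * Aup = 0 ∧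
  Adn * Adn + Adn * Adn = 0 ∧
  Aup * Aupᴴ + Aupᴴ * Aup = 1 ∧
  Aup * Adnᴴ + Adnᴴ * Aup = 0 ∧
  Adn * Aupᴴ + Aupᴴ * Adn = 0 ∧
  Adn * Adnᴴ + Adnᴴ * Adn = 1

/-- `dh(c) := 2λ n↑n↓ − μ(n↑+n↓) − h(n↑−n↓) − γ(c·A↑*A↓* + c̄·A↓A↑)`,
where `nₛ := Aₛ*·Aₛ`. -/
def dh (Aup Adn : M4) (mu h lam gam : ℝ) (c : ℂ) : M4 :=
  (2 * lam : ℂ) • (Aupᴴ * Aup * (Adnᴴ * Adn))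
    - (mu : ℂ) • (Aupᴴ * Aup + Adnᴴ * Adn)
    - (h : ℂ) • (Aupᴴ * Aup - Adnᴴ * Adn)
    - (gam : ℂ) • (c • (Aupᴴ * Adnᴴ) + (starRingEnd ℂ c) • (Adn * Aup))

/-- A density matrix: Hermitian, positive semidefinite, of trace 1. -/
def IsDensityMatrix (d : M4) : Prop :=
  d.IsHermitian ∧ d.PosSemidef ∧ d.trace = 1

/-- A self-consistent trajectory: a differentiable map `d : ℝ → M₄(ℂ)` such that
`d t` is a density matrix for all `t` and
`d′(t) = −i·[dh(Tr(d(t)·A↓A↑)), d(t)]` for all `t ∈ ℝ`. -/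
def SelfConsistent (Aup Adn : M4) (mu h lam gam : ℝ) (d : ℝ → M4) : Prop :=
  (∀ t : ℝ, IsDensityMatrix (d t)) ∧
  ∀ t : ℝ, HasDerivAt d
      ((-Complex.I) •
        (dh Aup Adn mu h lam gam ((d t * (Adn * Aup)).trace) * d t
          - d t * dh Aup Adn mu h lam gam ((d t * (Adn * Aup)).trace))) t

/-- Auxiliary: in a ℂ-module, `X + X = 0 → X = 0`. -/
lemma half_zero (X : M4) (hx : X + X = 0) : X = 0 := by
  have : (2:ℂ) • X = 0 := by rw [two_smul]; exact hx
  simpa using this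

/-- Key commutator identity from the CAR. -/
lemma car_comm (U V : M4) (hCAR : CAR U V) (mu h lam gam : ℝ) (c : ℂ) :
    (V * U) * dh U V mu h lam gam c - dh U V mu h lam gam c * (V * U)
      = (2 * (lam - mu) : ℂ) • (V * U) - (gam * c) • (1 - Uᴴ * U - Vᴴ * V) := by
  obtain ⟨c1, c2, c3, c4, c5, c6, c7⟩ := hCAR
  have hUU : U * U = 0 := half_zero _ c1
  have hVV : V * V = 0 := half_zero _ c3
  have hUV : U * V = -(V * U) := eq_neg_of_add_eq_zero_left c2
  have hUUs : U * Uᴴ = 1 - Uᴴ * U := eq_sub_of_add_eq c4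
  have hUVs : U * Vᴴ = -(Vᴴ * U) := eq_neg_of_add_eq_zero_left c5
  have hVUs : V * Uᴴ = -(Uᴴ * V) := eq_neg_of_add_eq_zero_left c6
  have hVVs : V * Vᴴ = 1 - Vᴴ * V := eq_sub_of_add_eq c7
  have hUUa : ∀ X : M4, U * (U * X) = 0 := fun X => by rw [← mul_assoc, hUU, zero_mul]
  have hVVa : ∀ X : M4, V * (V * X) = 0 := fun X => by rw [← mul_assoc, hVV, zero_mul]
  have hUVa : ∀ X : M4, U * (V * X) = -(V * (U * X)) := fun X => by
    rw [← mul_assoc, hUV, neg_mul, mul_assoc]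
  have hUUsa : ∀ X : M4, U * (Uᴴ * X) = X - Uᴴ * (U * X) := fun X => by
    rw [← mul_assoc, hUUs, sub_mul, one_mul, mul_assoc]
  have hUVsa : ∀ X : M4, U * (Vᴴ * X) = -(Vᴴ * (U * X)) := fun X => by
    rw [← mul_assoc, hUVs, neg_mul, mul_assoc]
  have hVUsa : ∀ X : M4, V * (Uᴴ * X) = -(Uᴴ * (V * X)) := fun X => by
    rw [← mul_assoc, hVUs, neg_mul, mul_assoc]
  have hVVsa : ∀ X : M4, V * (Vᴴ * X) = X - Vᴴ * (V * X) := fun X => by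
    rw [← mul_assoc, hVVs, sub_mul, one_mul, mul_assoc]
  have h1 : V * U * (Uᴴ * U) = V * U := by
    simp [mul_assoc, hUUsa, hUUa, hUU, hVV, hUV, hUUs, hUVs, hVUs, hVVs, hVVa, hUVa,
      hUVsa, hVUsa, hVVsa, mul_sub, sub_mul, mul_add, add_mul]
  have h2 : Uᴴ * U * (V * U) = 0 := by
    simp [mul_assoc, hUUsa, hUUa, hUU, hVV, hUV, hUUs, hUVs, hVUs, hVVs, hVVa, hUVa,
      hUVsa, hVUsa, hVVsa, mul_sub, sub_mul, mul_add, add_mul]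
  have h3 : V * U * (Vᴴ * V) = V * U := by
    simp [mul_assoc, hUUsa, hUUa, hUU, hVV, hUV, hUUs, hUVs, hVUs, hVVs, hVVa, hUVa,
      hUVsa, hVUsa, hVVsa, mul_sub, sub_mul, mul_add, add_mul]
  have h4 : Vᴴ * V * (V * U) = 0 := by
    simp [mul_assoc, hUUsa, hUUa, hUU, hVV, hUV, hUUs, hUVs, hVUs, hVVs, hVVa, hUVa,
      hUVsa, hVUsa, hVVsa, mul_sub, sub_mul, mul_add, add_mul]
  have hBC : V * U * (Uᴴ * Vᴴ) = 1 - Uᴴ * U - Vᴴ * V + Uᴴ * (Vᴴ * (V * U)) := by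
    simp [mul_assoc, hUUsa, hUUa, hUU, hVV, hUV, hUUs, hUVs, hVUs, hVVs, hVVa, hUVa,
      hUVsa, hVUsa, hVVsa, mul_sub, sub_mul, mul_add, add_mul]
    abel
  have hCB : Uᴴ * Vᴴ * (V * U) = Uᴴ * (Vᴴ * (V * U)) := by simp [mul_assoc]
  have hBB : V * U * (V * U) = 0 := by
    simp [mul_assoc, hUUsa, hUUa, hUU, hVV, hUV, hUUs, hUVs, hVUs, hVVs, hVVa, hUVa,
      hUVsa, hVUsa, hVVsa, mul_sub, sub_mul, mul_add, add_mul]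
  have hBq : V * U * (Uᴴ * U * (Vᴴ * V)) = V * U := by rw [← mul_assoc, h1, h3]
  have hqB : Uᴴ * U * (Vᴴ * V) * (V * U) = 0 := by rw [mul_assoc, h4, mul_zero]
  simp only [dh, mul_sub, sub_mul, mul_add, add_mul, mul_smul_comm, smul_mul_assoc,
    h1, h2, h3, h4, hBC, hCB, hBB, hBq, hqB, smul_zero]
  module

/-- along a self-consistent trajectory, `𝔷(t) := Tr(d(t)·A↓A↑)` is
differentiable and satisfies
`𝔷′(t) = i·(2(μ−λ) + γ·(1 − Tr(d(t)·(n↑+n↓))))·𝔷(t)`. -/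
theorem cooper_field_ode (Aup Adn : M4) (hCAR : CAR Aup Adn)
    (mu h lam gam : ℝ) (hgam : 0 ≤ gam)
    (d : ℝ → M4) (hd : SelfConsistent Aup Adn mu h lam gam d) :
    ∀ t : ℝ, HasDerivAt (fun s : ℝ => (d s * (Adn * Aup)).trace)
      (Complex.I * ((2 * (mu - lam) : ℂ)
          + (gam : ℂ) * (1 - (d t * (Aupᴴ * Aup + Adnᴴ * Adn)).trace))
        * (d t * (Adn * Aup)).trace) t := by
  intro t
  obtain ⟨hdm, hode⟩ := hd
  set B : M4 := Adn * Aup with hB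
  set c : ℂ := (d t * B).trace with hc
  set H : M4 := dh Aup Adn mu h lam gam c with hH
  set L : M4 →L[ℝ] ℂ := LinearMap.toContinuousLinearMap
    (((Matrix.traceLinearMap (Fin 4) ℂ ℂ).comp (LinearMap.mulRight ℂ B)).restrictScalars ℝ)
    with hL
  have hLapp : ∀ X : M4, L X = (X * B).trace := fun X => rfl
  have key : HasDerivAt (fun s => L (d s))
      (L ((-Complex.I) • (H * d t - d t * H))) t :=
    L.hasFDerivAt.comp_hasDerivAt t (hode t)
  have hfun : (fun s => L (d s)) = fun s : ℝ => (d s * B).trace := rfl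
  rw [hfun] at key
  convert key using 1
  rw [hLapp]
  have hcomm := car_comm Aup Adn hCAR mu h lam gam c
  have htr1 : (d t).trace = 1 := (hdm t).2.2
  rw [smul_mul_assoc, trace_smul, sub_mul, mul_assoc H, trace_sub,
    trace_mul_comm H (d t * B), mul_assoc (d t) H B, mul_assoc (d t) B H,
    ← trace_sub, ← mul_sub, hcomm]
  simp only [smul_eq_mul, mul_sub, mul_smul_comm, trace_smul, trace_sub, trace_add,
    mul_one, mul_add, htr1]
  push_cast
  ring
end
end

section
/- Electron density conservation: if d : ℝ → M₄(ℂ) is a self-consistent trajectory, then the electron density Tr(d(t)·(n↑+n↓)) is independent of t ∈ ℝ, is a real number, and lies in the interval [0,2]. -/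
open Matrix
open scoped ComplexOrder

noncomputable section

section Aux

lemma trace_nonneg_of_posSemidef {A : M4} (hA : A.PosSemidef) : 0 ≤ A.trace := by
  rw [Matrix.trace]
  apply Finset.sum_nonneg
  intro i _
  exact hA.diag_nonneg

lemma trace_mul_nonneg_of_posSemidef {A B : M4} (hA : A.PosSemidef) (hB : B.PosSemidef) :
    0 ≤ (A * B).trace := by
  obtain ⟨S, hs, hsh⟩ : ∃ S : M4, S * S = A ∧ S.IsHermitian := by
    open scoped MatrixOrder in
    exact ⟨CFC.sqrt A, CFC.sqrt_mul_sqrt_self A hA.nonneg, (CFC.sqrt_nonneg A).posSemidef.isHermitian⟩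
  have h1 : (A * B).trace = (S * B * S).trace := by
    conv_lhs => rw [← hs, Matrix.mul_assoc, Matrix.trace_mul_comm]
  rw [h1]
  have := hB.conjTranspose_mul_mul_same S
  rw [hsh.eq] at this
  exact trace_nonneg_of_posSemidef this

lemma comm_key (a b as bs : M4)
    (haa : a*a = 0) (hbb : b*b = 0) (hasas : as*as = 0) (hbsbs : bs*bs = 0)
    (hab : a*b = -(b*a)) (hasbs : as*bs = -(bs*as))
    (habs : a*bs = -(bs*a)) (hbas : b*as = -(as*b))
    (haas : a*as = 1 - as*a) (hbbs : b*bs = 1 - bs*b)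
    (mu h lam gam : ℝ) (c : ℂ)
    (H : M4)
    (hH : H = (2 * lam : ℂ) • (as * a * (bs * b))
      - (mu : ℂ) • (as * a + bs * b)
      - (h : ℂ) • (as * a - bs * b)
      - (gam : ℂ) • (c • (as * bs) + (starRingEnd ℂ c) • (b * a))) :
    (as*a + bs*b) * H - H * (as*a + bs*b)
      = (-(2*(gam:ℂ)*c)) • (as*bs) + (2*(gam:ℂ)*(starRingEnd ℂ c)) • (b*a) := by
  have haa' : ∀ x : M4, a*(a*x) = 0 := fun x => by rw [← mul_assoc, haa, zero_mul]
  have hbb' : ∀ x : M4, b*(b*x) = 0 := fun x => by rw [← mul_assoc, hbb, zero_mul]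
  have hasas' : ∀ x : M4, as*(as*x) = 0 := fun x => by rw [← mul_assoc, hasas, zero_mul]
  have hbsbs' : ∀ x : M4, bs*(bs*x) = 0 := fun x => by rw [← mul_assoc, hbsbs, zero_mul]
  have hab' : ∀ x : M4, a*(b*x) = -(b*(a*x)) := fun x => by
    rw [← mul_assoc, hab, ← mul_assoc, neg_mul]
  have hasbs' : ∀ x : M4, as*(bs*x) = -(bs*(as*x)) := fun x => by
    rw [← mul_assoc, hasbs, ← mul_assoc, neg_mul]
  have habs' : ∀ x : M4, a*(bs*x) = -(bs*(a*x)) := fun x => by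
    rw [← mul_assoc, habs, ← mul_assoc, neg_mul]
  have hbas' : ∀ x : M4, b*(as*x) = -(as*(b*x)) := fun x => by
    rw [← mul_assoc, hbas, ← mul_assoc, neg_mul]
  have haas' : ∀ x : M4, a*(as*x) = x - as*(a*x) := fun x => by
    rw [← mul_assoc, haas, sub_mul, one_mul, ← mul_assoc]
  have hbbs' : ∀ x : M4, b*(bs*x) = x - bs*(b*x) := fun x => by
    rw [← mul_assoc, hbbs, sub_mul, one_mul, ← mul_assoc]
  subst hH
  simp only [smul_add, smul_sub, smul_smul, sub_mul, mul_sub, add_mul, mul_add,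
    smul_mul_assoc, mul_smul_comm,
    mul_assoc, neg_mul, mul_neg, mul_one, one_mul,
    haa', hbb', hasas', hbsbs', hab', hasbs', habs', hbas', haas', hbbs',
    haa, hbb, hasas, hbsbs, hab, hasbs, habs, hbas, haas, hbbs,
    mul_zero, zero_mul, neg_neg, sub_zero, zero_sub, add_zero, zero_add, smul_zero, smul_neg]
  module

end Aux

/-- along a self-consistent trajectory the quantity is
independent of `t`, real, and lies in `[0,2]`. -/
theorem electron_density_conserved (Aup Adn : M4) (hCAR : CAR Aup Adn)
    (mu h lam gam : ℝ) (hgam : 0 ≤ gam)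
    (d : ℝ → M4) (hd : SelfConsistent Aup Adn mu h lam gam d) :
    ∃ r : ℝ, (0 : ℝ) ≤ r ∧ r ≤ 2 ∧
      ∀ t : ℝ, (d t * (Aupᴴ * Aup + Adnᴴ * Adn)).trace = (r : ℂ) := by
  obtain ⟨hdm, hder⟩ := hd
  obtain ⟨h1, h2, h3, h4, h5, h6, h7⟩ := hCAR
  have haa : Aup*Aup = 0 := by
    have h2s : (2:ℂ) • (Aup*Aup) = 0 := by rw [two_smul]; exact h1
    exact (smul_eq_zero.mp h2s).resolve_left (by norm_num)
  have hbb : Adn*Adn = 0 := by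
    have h2s : (2:ℂ) • (Adn*Adn) = 0 := by rw [two_smul]; exact h3
    exact (smul_eq_zero.mp h2s).resolve_left (by norm_num)
  have hab : Aup*Adn = -(Adn*Aup) := eq_neg_of_add_eq_zero_left h2
  have hasas : Aupᴴ*Aupᴴ = 0 := by
    have := congrArg conjTranspose haa
    simpa [conjTranspose_mul] using this
  have hbsbs : Adnᴴ*Adnᴴ = 0 := by
    have := congrArg conjTranspose hbb
    simpa [conjTranspose_mul] using this
  have hasbs : Aupᴴ*Adnᴴ = -(Adnᴴ*Aupᴴ) := by
    have := congrArg conjTranspose h2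
    simp only [conjTranspose_add, conjTranspose_mul, conjTranspose_zero] at this
    exact eq_neg_of_add_eq_zero_right this
  have habs : Aup*Adnᴴ = -(Adnᴴ*Aup) := eq_neg_of_add_eq_zero_left h5
  have hbas : Adn*Aupᴴ = -(Aupᴴ*Adn) := eq_neg_of_add_eq_zero_left h6
  have haas : Aup*Aupᴴ = 1 - Aupᴴ*Aup := eq_sub_of_add_eq h4
  have hbbs : Adn*Adnᴴ = 1 - Adnᴴ*Adn := eq_sub_of_add_eq h7
  set N : M4 := Aupᴴ * Aup + Adnᴴ * Adn with hNdef
  have hNpsd : N.PosSemidef :=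
    (posSemidef_conjTranspose_mul_self Aup).add (posSemidef_conjTranspose_mul_self Adn)
  -- the continuous linear functional `X ↦ trace (X * N)`
  set L : M4 →L[ℝ] ℂ := LinearMap.toContinuousLinearMap
    (((Matrix.traceLinearMap (Fin 4) ℂ ℂ).comp (LinearMap.mulRight ℂ N)).restrictScalars ℝ)
    with hLdef
  have hLapp : ∀ X : M4, L X = (X * N).trace := fun X => rfl
  set f : ℝ → ℂ := fun s => ((d s) * N).trace with hfdef
  -- the derivative of `f` vanishes
  have hderf : ∀ t : ℝ, HasDerivAt f 0 t := by
    intro t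
    set c : ℂ := ((d t) * (Adn * Aup)).trace with hcdef
    set H : M4 := dh Aup Adn mu h lam gam c with hHdef
    have hcomm : N * H - H * N
        = (-(2*(gam:ℂ)*c)) • (Aupᴴ*Adnᴴ) + (2*(gam:ℂ)*(starRingEnd ℂ c)) • (Adn*Aup) :=
      comm_key Aup Adn Aupᴴ Adnᴴ haa hbb hasas hbsbs hab hasbs habs hbas haas hbbs
        mu h lam gam c H (by rw [hHdef]; rfl)
    have hQ : ((d t) * (Aupᴴ*Adnᴴ)).trace = (starRingEnd ℂ) c := by
      have hH' : (d t)ᴴ = d t := (hdm t).1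
      have e : (Adn*Aup*(d t))ᴴ = (d t) * (Aupᴴ*Adnᴴ) := by
        simp [conjTranspose_mul, hH', Matrix.mul_assoc]
      rw [← e, trace_conjTranspose, Matrix.trace_mul_comm, ← hcdef]
      rfl
    have hz : L ((-Complex.I) • (H * d t - d t * H)) = 0 := by
      rw [hLapp, smul_mul_assoc, trace_smul]
      have t1 : (H*(d t*N)).trace = (d t*(N*H)).trace := by
        rw [Matrix.trace_mul_comm, Matrix.mul_assoc]
      have e : ((H*(d t) - (d t)*H) * N).trace = ((d t) * (N*H - H*N)).trace := by
        simp only [Matrix.sub_mul, Matrix.mul_sub, trace_sub, Matrix.mul_assoc, t1]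
      rw [e, hcomm]
      simp only [Matrix.mul_add, Matrix.mul_smul, trace_add, trace_smul, hQ, ← hcdef,
        smul_eq_mul]
      ring
    have hc : HasDerivAt (fun s => L (d s)) (L ((-Complex.I) •
        (H * d t - d t * H))) t := by
      exact (L.hasFDerivAt).comp_hasDerivAt t (hder t)
    rw [hz] at hc
    have : (fun s => L (d s)) = f := by
      funext s; rw [hLapp]
    rwa [this] at hc
  have hconst : ∀ t : ℝ, f t = f 0 := fun t =>
    is_const_of_deriv_eq_zero (fun s => (hderf s).differentiableAt)
      (fun s => (hderf s).deriv) t 0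
  -- bounds for `f 0`
  have h0 : 0 ≤ f 0 := trace_mul_nonneg_of_posSemidef (hdm 0).2.1 hNpsd
  have hMps : ((2:ℂ) • (1:M4) - N).PosSemidef := by
    have e : (2:ℂ) • (1:M4) - N = Aup*Aupᴴ + Adn*Adnᴴ := by
      rw [haas, hbbs, two_smul, hNdef]; abel
    rw [e]
    exact (posSemidef_self_mul_conjTranspose Aup).add
      (posSemidef_self_mul_conjTranspose Adn)
  have h2' : 0 ≤ ((d 0) * ((2:ℂ) • (1:M4) - N)).trace :=
    trace_mul_nonneg_of_posSemidef (hdm 0).2.1 hMps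
  have h2'' : f 0 ≤ 2 := by
    have e : ((d 0) * ((2:ℂ) • (1:M4) - N)).trace = 2 - f 0 := by
      simp [Matrix.mul_sub, Matrix.mul_smul, trace_sub, trace_smul, (hdm 0).2.2,
        smul_eq_mul, hfdef]
    rw [e] at h2'
    exact sub_nonneg.mp h2'

  obtain ⟨hre0, him0⟩ := Complex.le_def.mp h0
  obtain ⟨hre2, _⟩ := Complex.le_def.mp h2''
  refine ⟨(f 0).re, by simpa using hre0, by simpa using hre2, fun t => ?_⟩
  have : f t = f 0 := hconst t
  rw [show ((d t) * (Aupᴴ * Aup + Adnᴴ * Adn)).trace = f t from rfl, this]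
  exact Complex.ext rfl (by simpa using him0.symm)
end
end

section
/- Magnetization density conservation: if d : ℝ → M₄(ℂ) is a self-consistent trajectory, then the magnetization density Tr(d(t)·(n↑−n↓)) is independent of t ∈ ℝ, is a real number, and lies in the interval [−1,1]. -/
open Matrix
open scoped ComplexOrder

noncomputable section

lemma trace_nonneg_of_posSemidef_s8 {M : M4} (h : M.PosSemidef) : 0 ≤ M.trace := by
  rw [Matrix.trace]
  apply Finset.sum_nonneg
  intro i _
  exact h.diag_nonneg

section Alg
variable {a b : M4}

lemma dh_comm (hCAR : CAR a b) (mu h lam gam : ℝ) (c : ℂ) :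
    (aᴴ * a - bᴴ * b) * dh a b mu h lam gam c
      = dh a b mu h lam gam c * (aᴴ * a - bᴴ * b) := by
  obtain ⟨H1, H2, H3, H4, H5, H6, H7⟩ := hCAR
  have h1 : a * a = 0 := by
    have : (2:ℂ) • (a * a) = 0 := by rw [two_smul]; exact H1
    simpa using this
  have h2 : b * b = 0 := by
    have : (2:ℂ) • (b * b) = 0 := by rw [two_smul]; exact H3
    simpa using this
  have h3 : a * b = -(b * a) := eq_neg_of_add_eq_zero_left H2
  have h4 : a * aᴴ = 1 - aᴴ * a := eq_sub_of_add_eq H4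
  have h5 : a * bᴴ = -(bᴴ * a) := eq_neg_of_add_eq_zero_left H5
  have h6 : b * aᴴ = -(aᴴ * b) := eq_neg_of_add_eq_zero_left H6
  have h7 : b * bᴴ = 1 - bᴴ * b := eq_sub_of_add_eq H7
  have hc1 : aᴴ * aᴴ = 0 := by
    rw [← conjTranspose_mul, h1, conjTranspose_zero]
  have hc2 : bᴴ * bᴴ = 0 := by
    rw [← conjTranspose_mul, h2, conjTranspose_zero]
  have hc3 : bᴴ * aᴴ = -(aᴴ * bᴴ) := by
    rw [← conjTranspose_mul, h3, conjTranspose_neg, conjTranspose_mul]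
  have hc3' : aᴴ * bᴴ = -(bᴴ * aᴴ) := by rw [hc3, neg_neg]
  have h6' : aᴴ * b = -(b * aᴴ) := by rw [h6, neg_neg]
  -- idempotence
  have I1 : aᴴ * a * (aᴴ * a) = aᴴ * a := by
    calc aᴴ * a * (aᴴ * a) = aᴴ * (a * aᴴ) * a := by noncomm_ring
    _ = aᴴ * (1 - aᴴ * a) * a := by rw [h4]
    _ = aᴴ * a - aᴴ * aᴴ * (a * a) := by noncomm_ring
    _ = aᴴ * a := by rw [hc1]; simp
  have I2 : bᴴ * b * (bᴴ * b) = bᴴ * b := by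
    calc bᴴ * b * (bᴴ * b) = bᴴ * (b * bᴴ) * b := by noncomm_ring
    _ = bᴴ * (1 - bᴴ * b) * b := by rw [h7]
    _ = bᴴ * b - bᴴ * bᴴ * (b * b) := by noncomm_ring
    _ = bᴴ * b := by rw [hc2]; simp
  -- commutation of number operators
  have NC : aᴴ * a * (bᴴ * b) = bᴴ * b * (aᴴ * a) := by
    calc aᴴ * a * (bᴴ * b) = aᴴ * (a * bᴴ) * b := by noncomm_ring
    _ = aᴴ * (-(bᴴ * a)) * b := by rw [h5]
    _ = -(aᴴ * bᴴ * (a * b)) := by noncomm_ring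
    _ = -(aᴴ * bᴴ * (-(b * a))) := by rw [h3]
    _ = aᴴ * bᴴ * (b * a) := by noncomm_ring
    _ = -(bᴴ * aᴴ) * (b * a) := by rw [hc3']
    _ = -(bᴴ * (aᴴ * b) * a) := by noncomm_ring
    _ = -(bᴴ * (-(b * aᴴ)) * a) := by rw [h6']
    _ = bᴴ * b * (aᴴ * a) := by noncomm_ring
  -- pair operators
  have S1 : aᴴ * a * (aᴴ * bᴴ) = aᴴ * bᴴ := by
    calc aᴴ * a * (aᴴ * bᴴ) = aᴴ * (a * aᴴ) * bᴴ := by noncomm_ring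
    _ = aᴴ * (1 - aᴴ * a) * bᴴ := by rw [h4]
    _ = aᴴ * bᴴ - aᴴ * aᴴ * (a * bᴴ) := by noncomm_ring
    _ = aᴴ * bᴴ := by rw [hc1]; simp
  have S2 : bᴴ * b * (aᴴ * bᴴ) = aᴴ * bᴴ := by
    calc bᴴ * b * (aᴴ * bᴴ) = bᴴ * (b * aᴴ) * bᴴ := by noncomm_ring
    _ = bᴴ * (-(aᴴ * b)) * bᴴ := by rw [h6]
    _ = -(bᴴ * aᴴ) * (b * bᴴ) := by noncomm_ring
    _ = aᴴ * bᴴ * (b * bᴴ) := by rw [hc3, neg_neg]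
    _ = aᴴ * bᴴ * (1 - bᴴ * b) := by rw [h7]
    _ = aᴴ * bᴴ - aᴴ * (bᴴ * bᴴ) * b := by noncomm_ring
    _ = aᴴ * bᴴ := by rw [hc2]; simp
  have S3 : aᴴ * bᴴ * (aᴴ * a) = 0 := by
    calc aᴴ * bᴴ * (aᴴ * a) = aᴴ * (bᴴ * aᴴ) * a := by noncomm_ring
    _ = aᴴ * (-(aᴴ * bᴴ)) * a := by rw [hc3]
    _ = -(aᴴ * aᴴ * (bᴴ * a)) := by noncomm_ring
    _ = 0 := by rw [hc1]; simp
  have S4 : aᴴ * bᴴ * (bᴴ * b) = 0 := by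
    calc aᴴ * bᴴ * (bᴴ * b) = aᴴ * (bᴴ * bᴴ) * b := by noncomm_ring
    _ = 0 := by rw [hc2]; simp
  have T1 : aᴴ * a * (b * a) = 0 := by
    calc aᴴ * a * (b * a) = aᴴ * (a * b) * a := by noncomm_ring
    _ = aᴴ * (-(b * a)) * a := by rw [h3]
    _ = -(aᴴ * b * (a * a)) := by noncomm_ring
    _ = 0 := by rw [h1]; simp
  have T2 : bᴴ * b * (b * a) = 0 := by
    calc bᴴ * b * (b * a) = bᴴ * (b * b) * a := by noncomm_ring
    _ = 0 := by rw [h2]; simp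
  have T3 : b * a * (aᴴ * a) = b * a := by
    calc b * a * (aᴴ * a) = b * (a * aᴴ) * a := by noncomm_ring
    _ = b * (1 - aᴴ * a) * a := by rw [h4]
    _ = b * a - b * aᴴ * (a * a) := by noncomm_ring
    _ = b * a := by rw [h1]; simp
  have T4 : b * a * (bᴴ * b) = b * a := by
    calc b * a * (bᴴ * b) = b * (a * bᴴ) * b := by noncomm_ring
    _ = b * (-(bᴴ * a)) * b := by rw [h5]
    _ = -(b * bᴴ * (a * b)) := by noncomm_ring
    _ = -(b * bᴴ * (-(b * a))) := by rw [h3]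
    _ = b * bᴴ * (b * a) := by noncomm_ring
    _ = (1 - bᴴ * b) * (b * a) := by rw [h7]
    _ = b * a - bᴴ * (b * b) * a := by noncomm_ring
    _ = b * a := by rw [h2]; simp
  -- now the commutators with M := aᴴa - bᴴb
  have hN1 : (aᴴ * a - bᴴ * b) * (aᴴ * a) = (aᴴ * a) * (aᴴ * a - bᴴ * b) := by
    rw [sub_mul, mul_sub, I1, NC]
  have hN2 : (aᴴ * a - bᴴ * b) * (bᴴ * b) = (bᴴ * b) * (aᴴ * a - bᴴ * b) := by
    rw [sub_mul, mul_sub, I2, NC]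
  have hK : (aᴴ * a - bᴴ * b) * (aᴴ * a * (bᴴ * b))
      = (aᴴ * a * (bᴴ * b)) * (aᴴ * a - bᴴ * b) := by
    rw [sub_mul, mul_sub]
    rw [show aᴴ * a * (aᴴ * a * (bᴴ * b)) = aᴴ * a * (aᴴ * a) * (bᴴ * b) by noncomm_ring, I1]
    rw [show bᴴ * b * (aᴴ * a * (bᴴ * b)) = bᴴ * b * (aᴴ * a) * (bᴴ * b) by noncomm_ring, ← NC]
    rw [show aᴴ * a * (bᴴ * b) * (bᴴ * b) = aᴴ * a * (bᴴ * b * (bᴴ * b)) by noncomm_ring, I2]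
    rw [show aᴴ * a * (bᴴ * b) * (aᴴ * a) = aᴴ * a * (bᴴ * b * (aᴴ * a)) by noncomm_ring, ← NC]
    rw [show aᴴ * a * (aᴴ * a * (bᴴ * b)) = aᴴ * a * (aᴴ * a) * (bᴴ * b) by noncomm_ring, I1]
  have hS : (aᴴ * a - bᴴ * b) * (aᴴ * bᴴ) = (aᴴ * bᴴ) * (aᴴ * a - bᴴ * b) := by
    rw [sub_mul, mul_sub, S1, S2, S3, S4]; simp
  have hT : (aᴴ * a - bᴴ * b) * (b * a) = (b * a) * (aᴴ * a - bᴴ * b) := by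
    rw [sub_mul, mul_sub, T1, T2, T3, T4]; simp
  simp only [dh, mul_sub, sub_mul, mul_add, add_mul, mul_smul_comm, smul_mul_assoc,
    hN1, hN2, hK, hS, hT]
  module

end Alg

/-- along a self-consistent trajectory the quantity is
independent of `t`, real, and lies in `[-1,1]`. -/
theorem magnetization_density_conserved (Aup Adn : M4) (hCAR : CAR Aup Adn)
    (mu h lam gam : ℝ) (hgam : 0 ≤ gam)
    (d : ℝ → M4) (hd : SelfConsistent Aup Adn mu h lam gam d) :
    ∃ r : ℝ, (-1 : ℝ) ≤ r ∧ r ≤ 1 ∧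
      ∀ t : ℝ, (d t * (Aupᴴ * Aup - Adnᴴ * Adn)).trace = (r : ℂ) := by
  classical
  set Mm : M4 := Aupᴴ * Aup - Adnᴴ * Adn with hMmdef
  -- the linear functional X ↦ Tr (X * Mm)
  let L0 : M4 →ₗ[ℂ] ℂ :=
    (Matrix.traceLinearMap (Fin 4) ℂ ℂ).comp (LinearMap.mulRight ℂ Mm)
  let L : M4 →L[ℝ] ℂ := LinearMap.toContinuousLinearMap (L0.restrictScalars ℝ)
  have hL : ∀ X : M4, L X = (X * Mm).trace := fun X => rfl
  have hder : ∀ t : ℝ, HasDerivAt (fun s => (d s * Mm).trace) 0 t := by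
    intro t
    have h0 := hd.2 t
    have h1 := L.hasFDerivAt.comp_hasDerivAt t h0
    have h2 : (fun s => L (d s)) = fun s => (d s * Mm).trace := by
      funext s; exact hL _
    set c : ℂ := (d t * (Adn * Aup)).trace
    set H : M4 := dh Aup Adn mu h lam gam c with hH
    have hcomm : Mm * H = H * Mm := dh_comm hCAR mu h lam gam c
    have hzero : L ((-Complex.I) • (H * d t - d t * H)) = 0 := by
      rw [hL, smul_mul_assoc, trace_smul, sub_mul, trace_sub]
      have : (H * d t * Mm).trace = (d t * H * Mm).trace := by
        calc (H * d t * Mm).trace = (H * (d t * Mm)).trace := by rw [mul_assoc]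
          _ = ((d t * Mm) * H).trace := trace_mul_comm _ _
          _ = (d t * (Mm * H)).trace := by rw [mul_assoc]
          _ = (d t * (H * Mm)).trace := by rw [hcomm]
          _ = (d t * H * Mm).trace := by rw [mul_assoc]
      rw [this, sub_self, smul_zero]
    have h1' : HasDerivAt (fun s => L (d s))
        (L ((-Complex.I) • (H * d t - d t * H))) t := h1
    rw [hzero] at h1'
    rw [← h2]
    exact h1'
  have hconst : ∀ t : ℝ, (d t * Mm).trace = (d 0 * Mm).trace := fun t =>
    is_const_of_deriv_eq_zero (fun x => (hder x).differentiableAt)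
      (fun x => (hder x).deriv) t 0
  -- positivity facts at t = 0
  obtain ⟨H1, H2, H3, H4, H5, H6, H7⟩ := hCAR
  obtain ⟨hherm, hpsd, htr⟩ := hd.1 0
  have h4 : Aup * Aupᴴ = 1 - Aupᴴ * Aup := eq_sub_of_add_eq H4
  have h7 : Adn * Adnᴴ = 1 - Adnᴴ * Adn := eq_sub_of_add_eq H7
  have key : ∀ A : M4, A * Aᴴ = 1 - Aᴴ * A →
      0 ≤ (d 0 * (Aᴴ * A)).trace ∧ (d 0 * (Aᴴ * A)).trace ≤ 1 := by
    intro A hA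
    constructor
    · have : (d 0 * (Aᴴ * A)).trace = (A * d 0 * Aᴴ).trace := by
        rw [← mul_assoc, trace_mul_cycle]
      rw [this]
      exact trace_nonneg_of_posSemidef_s8 (hpsd.mul_mul_conjTranspose_same A)
    · have h1 : (d 0 * (Aᴴ * A)).trace = 1 - (Aᴴ * d 0 * A).trace := by
        have e1 : Aᴴ * A = 1 - A * Aᴴ := by rw [hA, sub_sub_cancel]
        rw [e1, mul_sub, trace_sub, mul_one, htr]
        congr 1
        rw [← mul_assoc, trace_mul_cycle]
      rw [h1]
      have := trace_nonneg_of_posSemidef_s8 (hpsd.conjTranspose_mul_mul_same A)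
      exact sub_le_self 1 this
  obtain ⟨hx0, hx1⟩ := key Aup h4
  obtain ⟨hy0, hy1⟩ := key Adn h7
  set x : ℂ := (d 0 * (Aupᴴ * Aup)).trace with hxdef
  set y : ℂ := (d 0 * (Adnᴴ * Adn)).trace with hydef
  have hm : (d 0 * Mm).trace = x - y := by
    rw [hMmdef, mul_sub, trace_sub]
  have hxre : 0 ≤ x.re := by simpa using (Complex.le_def.mp hx0).1
  have hxre1 : x.re ≤ 1 := by simpa using (Complex.le_def.mp hx1).1
  have hxim : x.im = 0 := by simpa using (Complex.le_def.mp hx0).2.symm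
  have hyre : 0 ≤ y.re := by simpa using (Complex.le_def.mp hy0).1
  have hyre1 : y.re ≤ 1 := by simpa using (Complex.le_def.mp hy1).1
  have hyim : y.im = 0 := by simpa using (Complex.le_def.mp hy0).2.symm
  refine ⟨x.re - y.re, by linarith, by linarith, ?_⟩
  intro t
  rw [hconst t, hm]
  apply Complex.ext
  · simp
  · simp [hxim, hyim]
end
end

section
/- Coulomb correlation density conservation: if d : ℝ → M₄(ℂ) is a self-consistent trajectory, then the Coulomb correlation density Tr(d(t)·n↑n↓) is independent of t ∈ ℝ, is a real number, and lies in the interval [0,1]. -/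
open Matrix
open scoped ComplexOrder

noncomputable section

/-! ### Auxiliary lemmas -/

/-- A positive semidefinite complex matrix has nonnegative trace. -/
theorem aux_trace_nonneg_of_psd {n : Type*} [Fintype n] [DecidableEq n]
    {M : Matrix n n ℂ} (hM : M.PosSemidef) : 0 ≤ M.trace := by
  rw [Matrix.trace]
  apply Finset.sum_nonneg
  intro i _
  exact hM.diag_nonneg

open scoped MatrixOrder in
/-- The trace of a product of two positive semidefinite matrices is nonnegative. -/
theorem aux_trace_mul_psd {n : Type*} [Fintype n] [DecidableEq n] {M N : Matrix n n ℂ}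
    (hM : M.PosSemidef) (hN : N.PosSemidef) : 0 ≤ (M * N).trace := by
  have hs := (CFC.sqrt_nonneg M).posSemidef
  have h1 : M = CFC.sqrt M * CFC.sqrt M := by rw [← pow_two, CFC.sq_sqrt M hM.nonneg]
  have h3 : ((CFC.sqrt M)ᴴ * N * CFC.sqrt M).PosSemidef := hN.conjTranspose_mul_mul_same _
  rw [hs.isHermitian.eq] at h3
  have h4 := aux_trace_nonneg_of_psd h3
  rw [h1]
  rwa [trace_mul_comm, ← mul_assoc] at h4

/-- Key algebraic consequences of the CAR relations, about
`N = n↑n↓ = aᴴa(bᴴb)`, `Q = aᴴbᴴ` and `P = ba`. -/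
theorem CAR.facts {a b : M4} (hc : CAR a b) :
    ((aᴴ*a*(bᴴ*b)) * (aᴴ*bᴴ) = aᴴ*bᴴ) ∧
    ((aᴴ*bᴴ) * (aᴴ*a*(bᴴ*b)) = 0) ∧
    ((aᴴ*a*(bᴴ*b)) * (b*a) = 0) ∧
    ((b*a) * (aᴴ*a*(bᴴ*b)) = b*a) ∧
    ((aᴴ*a*(bᴴ*b)) * (aᴴ*a) = (aᴴ*a) * (aᴴ*a*(bᴴ*b))) ∧
    ((aᴴ*a*(bᴴ*b)) * (bᴴ*b) = (bᴴ*b) * (aᴴ*a*(bᴴ*b))) ∧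
    ((aᴴ*a)*(bᴴ*b) = (bᴴ*b)*(aᴴ*a)) ∧
    ((aᴴ*a*(bᴴ*b)) * (aᴴ*a*(bᴴ*b)) = aᴴ*a*(bᴴ*b)) := by
  obtain ⟨h1, h2, h3, h4, h5, h6, h7⟩ := hc
  have two_ne : (2 : ℂ) ≠ 0 := by norm_num
  have ha : a * a = 0 := by
    rw [← two_smul ℂ] at h1; rcases smul_eq_zero.mp h1 with h | h
    · exact absurd h two_ne
    · exact h
  have hb : b * b = 0 := by
    rw [← two_smul ℂ] at h3; rcases smul_eq_zero.mp h3 with h | h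
    · exact absurd h two_ne
    · exact h
  have hah : aᴴ * aᴴ = 0 := by
    have := congrArg conjTranspose ha; simpa [conjTranspose_mul] using this
  have hbh : bᴴ * bᴴ = 0 := by
    have := congrArg conjTranspose hb; simpa [conjTranspose_mul] using this
  have s1 : a * b = -(b * a) := eq_neg_of_add_eq_zero_left h2
  have s1' : b * a = -(a * b) := eq_neg_of_add_eq_zero_right h2
  have s2 : aᴴ * bᴴ = -(bᴴ * aᴴ) := by
    have := congrArg conjTranspose h2
    simp only [conjTranspose_add, conjTranspose_mul, conjTranspose_zero] at this
    exact eq_neg_of_add_eq_zero_right this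
  have s3 : aᴴ * b = -(b * aᴴ) := eq_neg_of_add_eq_zero_right h6
  have s3' : b * aᴴ = -(aᴴ * b) := eq_neg_of_add_eq_zero_left h6
  have s4 : a * bᴴ = -(bᴴ * a) := eq_neg_of_add_eq_zero_left h5
  have s4' : bᴴ * a = -(a * bᴴ) := eq_neg_of_add_eq_zero_right h5
  have u1 : a * aᴴ = 1 - aᴴ * a := eq_sub_of_add_eq h4
  have u2 : b * bᴴ = 1 - bᴴ * b := eq_sub_of_add_eq h7
  have nu_a : (aᴴ*a)*a = 0 := by rw [mul_assoc, ha, mul_zero]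
  have a_nu : a*(aᴴ*a) = a := by
    rw [← mul_assoc, u1, sub_mul, one_mul, mul_assoc, ha, mul_zero, sub_zero]
  have nu_ah : (aᴴ*a)*aᴴ = aᴴ := by
    rw [mul_assoc, u1, mul_sub, mul_one, ← mul_assoc, hah, zero_mul, sub_zero]
  have ah_nu : aᴴ*(aᴴ*a) = 0 := by rw [← mul_assoc, hah, zero_mul]
  have nd_b : (bᴴ*b)*b = 0 := by rw [mul_assoc, hb, mul_zero]
  have b_nd : b*(bᴴ*b) = b := by
    rw [← mul_assoc, u2, sub_mul, one_mul, mul_assoc, hb, mul_zero, sub_zero]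
  have nd_bh : (bᴴ*b)*bᴴ = bᴴ := by
    rw [mul_assoc, u2, mul_sub, mul_one, ← mul_assoc, hbh, zero_mul, sub_zero]
  have nu_b : (aᴴ*a)*b = b*(aᴴ*a) := by
    rw [mul_assoc, s1, mul_neg, ← mul_assoc, s3, neg_mul, neg_neg, mul_assoc]
  have nu_bh : (aᴴ*a)*bᴴ = bᴴ*(aᴴ*a) := by
    rw [mul_assoc, s4, mul_neg, ← mul_assoc, s2, neg_mul, neg_neg, mul_assoc]
  have nd_a : (bᴴ*b)*a = a*(bᴴ*b) := by
    rw [mul_assoc, s1', mul_neg, ← mul_assoc, s4', neg_mul, neg_neg, mul_assoc]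
  have s2' : bᴴ * aᴴ = -(aᴴ * bᴴ) := by rw [s2, neg_neg]
  have nd_ah : (bᴴ*b)*aᴴ = aᴴ*(bᴴ*b) := by
    rw [mul_assoc, s3', mul_neg, ← mul_assoc, s2', neg_mul, neg_neg, mul_assoc]
  have comm : (aᴴ*a)*(bᴴ*b) = (bᴴ*b)*(aᴴ*a) := by
    rw [← mul_assoc, nu_bh, mul_assoc, nu_b, ← mul_assoc]
  have idem_nd : (bᴴ*b)*(bᴴ*b) = bᴴ*b := by rw [← mul_assoc, nd_bh]
  have idem_nu : (aᴴ*a)*(aᴴ*a) = aᴴ*a := by rw [← mul_assoc, nu_ah]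
  have e2 : (bᴴ*b)*(aᴴ*a*(bᴴ*b)) = aᴴ*a*(bᴴ*b) := by
    rw [← mul_assoc, ← comm, mul_assoc, idem_nd]
  refine ⟨?_, ?_, ?_, ?_, ?_, ?_, comm, ?_⟩
  · have ndQ : (bᴴ*b)*(aᴴ*bᴴ) = aᴴ*bᴴ := by rw [← mul_assoc, nd_ah, mul_assoc, nd_bh]
    rw [mul_assoc, ndQ, ← mul_assoc, nu_ah]
  · rw [← mul_assoc, mul_assoc aᴴ, ← nu_bh, ← mul_assoc, ← mul_assoc, ah_nu,
      zero_mul, zero_mul, zero_mul]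
  · rw [mul_assoc, ← mul_assoc (bᴴ*b), nd_b, zero_mul, mul_zero]
  · rw [← mul_assoc, mul_assoc b, a_nu, mul_assoc, ← nd_a, ← mul_assoc, b_nd]
  · rw [mul_assoc, comm, ← mul_assoc]
  · have e1 : (aᴴ*a*(bᴴ*b))*(bᴴ*b) = aᴴ*a*(bᴴ*b) := by rw [mul_assoc, idem_nd]
    rw [e1, e2]
  · rw [mul_assoc (aᴴ*a) (bᴴ*b), e2, ← mul_assoc, idem_nu]

/-- The commutator of `N = n↑n↓` with the self-consistent Hamiltonian. -/
theorem aux_comm_dh {a b : M4} (hc : CAR a b) (m hh l g : ℝ) (c : ℂ) :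
    (aᴴ*a*(bᴴ*b)) * dh a b m hh l g c - dh a b m hh l g c * (aᴴ*a*(bᴴ*b))
      = (g:ℂ) • ((starRingEnd ℂ c) • (b*a) - c • (aᴴ*bᴴ)) := by
  obtain ⟨NQ, QN, NP, PN, Nnu, Nnd, -, -⟩ := hc.facts
  simp only [dh, mul_sub, sub_mul, mul_add, add_mul, mul_smul_comm, smul_mul_assoc,
    NQ, QN, NP, PN, Nnu, Nnd, mul_zero, zero_mul, smul_zero, smul_sub, zero_add]
  abel

/-- along a self-consistent trajectory the quantity is
independent of `t`, real, and lies in `[0,1]`. -/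
theorem coulomb_correlation_conserved (Aup Adn : M4) (hCAR : CAR Aup Adn)
    (mu h lam gam : ℝ) (hgam : 0 ≤ gam)
    (d : ℝ → M4) (hd : SelfConsistent Aup Adn mu h lam gam d) :
    ∃ r : ℝ, (0 : ℝ) ≤ r ∧ r ≤ 1 ∧
      ∀ t : ℝ, (d t * (Aupᴴ * Aup * (Adnᴴ * Adn))).trace = (r : ℂ) := by
  obtain ⟨hdm, hdd⟩ := hd
  set N : M4 := Aupᴴ * Aup * (Adnᴴ * Adn) with hNdef
  obtain ⟨-, -, -, -, -, -, hcomm, hidem⟩ := hCAR.facts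
  -- N is Hermitian
  have hNherm : N.IsHermitian := by
    show Nᴴ = N
    rw [hNdef]
    simp only [conjTranspose_mul, conjTranspose_conjTranspose]
    rw [← hcomm, mul_assoc]
  -- N is positive semidefinite
  have hNpsd : N.PosSemidef := by
    have h0 := Matrix.posSemidef_conjTranspose_mul_self N
    rwa [hNherm.eq, hidem] at h0
  -- 1 - N is positive semidefinite
  have hN1psd : ((1 : M4) - N).PosSemidef := by
    have hherm : ((1 : M4) - N).IsHermitian := by
      show ((1 : M4) - N)ᴴ = 1 - N
      rw [conjTranspose_sub, conjTranspose_one, hNherm.eq]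
    have hid : ((1 : M4) - N) * ((1 : M4) - N) = 1 - N := by
      rw [sub_mul, one_mul, mul_sub, mul_one, hidem, ← hNdef, sub_self, sub_zero]
    have h0 := Matrix.posSemidef_conjTranspose_mul_self ((1 : M4) - N)
    rwa [hherm.eq, hid] at h0
  -- the quantity as a function of time
  set f : ℝ → ℂ := fun t => (d t * N).trace with hfdef
  -- f has zero derivative everywhere
  have hder : ∀ t : ℝ, HasDerivAt f 0 t := by
    intro t
    set c : ℂ := (d t * (Adn * Aup)).trace with hcdef
    set H : M4 := dh Aup Adn mu h lam gam c with hHdef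
    let Lm : M4 →ₗ[ℝ] ℂ :=
      { toFun := fun X : M4 => (X * N).trace
        map_add' := fun X Y => by
          show ((X + Y) * N).trace = (X * N).trace + (Y * N).trace
          rw [add_mul, trace_add]
        map_smul' := fun r X => by
          show ((r • X) * N).trace = r • (X * N).trace
          rw [smul_mul_assoc, trace_smul] }
    let L : M4 →L[ℝ] ℂ := LinearMap.toContinuousLinearMap Lm
    have h0 : HasDerivAt (fun s => L (d s))
        (L ((-Complex.I) • (H * d t - d t * H))) t :=
      (L.hasFDerivAt).comp_hasDerivAt t (hdd t)
    have hLval : L ((-Complex.I) • (H * d t - d t * H)) = 0 := by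
      show ((((-Complex.I) • (H * d t - d t * H)) * N)).trace = 0
      rw [smul_mul_assoc, trace_smul]
      have hinner : ((H * d t - d t * H) * N).trace = 0 := by
        have e1 : ((H * d t) * N).trace = (d t * (N * H)).trace := by
          rw [trace_mul_cycle, ← trace_mul_comm, mul_assoc]
        have e2 : ((d t * H) * N).trace = (d t * (H * N)).trace := by
          rw [mul_assoc]
        rw [sub_mul, trace_sub, e1, e2, ← trace_sub, ← mul_sub]
        have hcd := aux_comm_dh hCAR mu h lam gam c
        rw [← hHdef, ← hNdef] at hcd
        rw [hcd]
        -- trace of d t * (γ • (c̄ • P − c • Q))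
        have hQ : (d t * (Aupᴴ * Adnᴴ)).trace = starRingEnd ℂ c := by
          have hmat : d t * (Aupᴴ * Adnᴴ) = ((Adn * Aup) * d t)ᴴ := by
            rw [conjTranspose_mul, conjTranspose_mul, (hdm t).1.eq]
          rw [hmat, trace_conjTranspose, trace_mul_comm, ← hcdef]
          rfl
        rw [mul_smul_comm, trace_smul, mul_sub, mul_smul_comm, mul_smul_comm,
          trace_sub, trace_smul, trace_smul, ← hcdef, hQ]
        simp only [smul_eq_mul]
        ring
      rw [hinner, smul_zero]
    rw [hLval] at h0
    exact h0
  -- f is constant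
  have hconst : ∀ t : ℝ, f t = f 0 :=
    fun t => is_const_of_deriv_eq_zero
      (fun s => (hder s).differentiableAt)
      (fun s => (hder s).deriv) t 0
  -- bounds at time 0
  have hpos : (0 : ℂ) ≤ f 0 := aux_trace_mul_psd (hdm 0).2.1 hNpsd
  have hle : f 0 ≤ 1 := by
    have h1 : (0 : ℂ) ≤ (d 0 * ((1 : M4) - N)).trace :=
      aux_trace_mul_psd (hdm 0).2.1 hN1psd
    rw [mul_sub, mul_one, trace_sub, (hdm 0).2.2] at h1
    exact sub_nonneg.mp h1
  obtain ⟨hre0, him0⟩ := Complex.nonneg_iff.mp hpos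
  have hre1 : (f 0).re ≤ 1 := by
    have h2 := (Complex.le_def.mp hle).1
    simpa using h2
  refine ⟨(f 0).re, hre0, hre1, fun t => ?_⟩
  rw [show (d t * (Aupᴴ * Aup * (Adnᴴ * Adn))).trace = f t from rfl, hconst t]
  exact (Complex.ext (by simp) (by simpa using him0)).symm
end
end

section
/- Cooper-field density evolution: if d : ℝ → M₄(ℂ) is a self-consistent trajectory, then for all t ∈ ℝ one has Tr(d(t)·A↓A↑) = Tr(d(0)·A↓A↑) · exp(i·t·ν), where ν := 2(μ−λ) + γ·(1 − Re Tr(d(0)·(n↑+n↓))). -/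
open Matrix
open scoped ComplexOrder

noncomputable section

/-! ### Auxiliary algebra lemmas -/

section Aux

lemma car_rules (a b : M4) (hCAR : CAR a b) :
    a * a = 0 ∧ b * b = 0 ∧ aᴴ * aᴴ = 0 ∧ bᴴ * bᴴ = 0 ∧
    a * b = -(b * a) ∧ bᴴ * aᴴ = -(aᴴ * bᴴ) ∧
    a * aᴴ = 1 - aᴴ * a ∧ b * bᴴ = 1 - bᴴ * b ∧
    a * bᴴ = -(bᴴ * a) ∧ b * aᴴ = -(aᴴ * b) := by
  obtain ⟨h1, h2, h3, h4, h5, h6, h7⟩ := hCAR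
  have raa : a * a = 0 := by
    have h : (2:ℂ) • (a*a) = 0 := by rw [two_smul]; exact h1
    simpa using h
  have rbb : b * b = 0 := by
    have h : (2:ℂ) • (b*b) = 0 := by rw [two_smul]; exact h3
    simpa using h
  have raHaH : aᴴ * aᴴ = 0 := by
    have := congrArg conjTranspose raa; simpa using this
  have rbHbH : bᴴ * bᴴ = 0 := by
    have := congrArg conjTranspose rbb; simpa using this
  have h2' : bᴴ * aᴴ + aᴴ * bᴴ = 0 := by
    have := congrArg conjTranspose h2
    simpa [conjTranspose_add, conjTranspose_mul] using this
  exact ⟨raa, rbb, raHaH, rbHbH, eq_neg_of_add_eq_zero_left h2,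
    eq_neg_of_add_eq_zero_left h2', eq_sub_of_add_eq h4, eq_sub_of_add_eq h7,
    eq_neg_of_add_eq_zero_left h5, eq_neg_of_add_eq_zero_left h6⟩

lemma commutatorB (a b : M4) (hCAR : CAR a b) (mu h lam gam : ℝ) (c : ℂ) :
    (b * a) * dh a b mu h lam gam c - dh a b mu h lam gam c * (b * a)
      = (2 * lam - 2 * mu : ℂ) • (b * a)
        - ((gam : ℂ) * c) • (1 - (aᴴ * a + bᴴ * b)) := by
  obtain ⟨raa, rbb, raHaH, rbHbH, rab, rbHaH, raaH, rbbH, rabH, rbaH⟩ := car_rules a b hCAR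
  have raa' : ∀ x : M4, a * (a * x) = 0 := fun x => by rw [← mul_assoc, raa, zero_mul]
  have rbb' : ∀ x : M4, b * (b * x) = 0 := fun x => by rw [← mul_assoc, rbb, zero_mul]
  have raHaH' : ∀ x : M4, aᴴ * (aᴴ * x) = 0 := fun x => by rw [← mul_assoc, raHaH, zero_mul]
  have rbHbH' : ∀ x : M4, bᴴ * (bᴴ * x) = 0 := fun x => by rw [← mul_assoc, rbHbH, zero_mul]
  have rab' : ∀ x : M4, a * (b * x) = -(b * (a * x)) := fun x => by
    rw [← mul_assoc, ← mul_assoc, rab, neg_mul]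
  have rbHaH' : ∀ x : M4, bᴴ * (aᴴ * x) = -(aᴴ * (bᴴ * x)) := fun x => by
    rw [← mul_assoc, ← mul_assoc, rbHaH, neg_mul]
  have raaH' : ∀ x : M4, a * (aᴴ * x) = x - aᴴ * (a * x) := fun x => by
    rw [← mul_assoc, ← mul_assoc, raaH, sub_mul, one_mul]
  have rbbH' : ∀ x : M4, b * (bᴴ * x) = x - bᴴ * (b * x) := fun x => by
    rw [← mul_assoc, ← mul_assoc, rbbH, sub_mul, one_mul]
  have rabH' : ∀ x : M4, a * (bᴴ * x) = -(bᴴ * (a * x)) := fun x => by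
    rw [← mul_assoc, ← mul_assoc, rabH, neg_mul]
  have rbaH' : ∀ x : M4, b * (aᴴ * x) = -(aᴴ * (b * x)) := fun x => by
    rw [← mul_assoc, ← mul_assoc, rbaH, neg_mul]
  simp only [dh, mul_sub, sub_mul, mul_add, add_mul, smul_sub, smul_add,
    mul_smul_comm, smul_mul_assoc, mul_assoc,
    raa, rbb, raHaH, rbHbH, rab, rbHaH, raaH, rbbH, rabH, rbaH,
    raa', rbb', raHaH', rbHbH', rab', rbHaH', raaH', rbbH', rabH', rbaH',
    mul_one, one_mul, mul_zero, zero_mul, smul_zero, mul_neg, neg_mul, smul_neg,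
    sub_zero, zero_sub, neg_neg, mul_sub, sub_mul]
  module

lemma commutatorN (a b : M4) (hCAR : CAR a b) (mu h lam gam : ℝ) (c : ℂ) :
    (aᴴ * a + bᴴ * b) * dh a b mu h lam gam c
        - dh a b mu h lam gam c * (aᴴ * a + bᴴ * b)
      = ((2 * gam : ℂ) * (starRingEnd ℂ c)) • (b * a)
        - ((2 * gam : ℂ) * c) • (aᴴ * bᴴ) := by
  obtain ⟨raa, rbb, raHaH, rbHbH, rab, rbHaH, raaH, rbbH, rabH, rbaH⟩ := car_rules a b hCAR
  have raa' : ∀ x : M4, a * (a * x) = 0 := fun x => by rw [← mul_assoc, raa, zero_mul]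
  have rbb' : ∀ x : M4, b * (b * x) = 0 := fun x => by rw [← mul_assoc, rbb, zero_mul]
  have raHaH' : ∀ x : M4, aᴴ * (aᴴ * x) = 0 := fun x => by rw [← mul_assoc, raHaH, zero_mul]
  have rbHbH' : ∀ x : M4, bᴴ * (bᴴ * x) = 0 := fun x => by rw [← mul_assoc, rbHbH, zero_mul]
  have rab' : ∀ x : M4, a * (b * x) = -(b * (a * x)) := fun x => by
    rw [← mul_assoc, ← mul_assoc, rab, neg_mul]
  have rbHaH' : ∀ x : M4, bᴴ * (aᴴ * x) = -(aᴴ * (bᴴ * x)) := fun x => by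
    rw [← mul_assoc, ← mul_assoc, rbHaH, neg_mul]
  have raaH' : ∀ x : M4, a * (aᴴ * x) = x - aᴴ * (a * x) := fun x => by
    rw [← mul_assoc, ← mul_assoc, raaH, sub_mul, one_mul]
  have rbbH' : ∀ x : M4, b * (bᴴ * x) = x - bᴴ * (b * x) := fun x => by
    rw [← mul_assoc, ← mul_assoc, rbbH, sub_mul, one_mul]
  have rabH' : ∀ x : M4, a * (bᴴ * x) = -(bᴴ * (a * x)) := fun x => by
    rw [← mul_assoc, ← mul_assoc, rabH, neg_mul]
  have rbaH' : ∀ x : M4, b * (aᴴ * x) = -(aᴴ * (b * x)) := fun x => by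
    rw [← mul_assoc, ← mul_assoc, rbaH, neg_mul]
  simp only [dh, mul_sub, sub_mul, mul_add, add_mul, smul_sub, smul_add,
    mul_smul_comm, smul_mul_assoc, mul_assoc,
    raa, rbb, raHaH, rbHbH, rab, rbHaH, raaH, rbbH, rabH, rbaH,
    raa', rbb', raHaH', rbHbH', rab', rbHaH', raaH', rbbH', rabH', rbaH',
    mul_one, one_mul, mul_zero, zero_mul, smul_zero, mul_neg, neg_mul, smul_neg,
    sub_zero, zero_sub, neg_neg, mul_sub, sub_mul]
  module

/-- Cyclicity helper for traces of commutators. -/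
lemma trace_comm_helper (X D C : M4) :
    (((-Complex.I) • (X * D - D * X)) * C).trace
      = (-Complex.I) * (D * (C * X - X * C)).trace := by
  rw [smul_mul_assoc, trace_smul, smul_eq_mul]
  congr 1
  rw [sub_mul, trace_sub, mul_sub, trace_sub, mul_assoc D X C]
  congr 1
  rw [trace_mul_comm (X * D) C, ← mul_assoc, trace_mul_comm (C * X) D]

/-- The ℝ-continuous-linear map `M ↦ Tr(M·C)`. -/
def traceMulCLM (C : M4) : M4 →L[ℝ] ℂ :=
  LinearMap.toContinuousLinearMap
    { toFun := fun M => (M * C).trace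
      map_add' := fun x y => by
        show ((x + y) * C).trace = (x * C).trace + (y * C).trace
        rw [add_mul, trace_add]
      map_smul' := fun r x => by
        show ((r • x) * C).trace = r • (x * C).trace
        rw [smul_mul_assoc, trace_smul] }

lemma hasDerivAt_trace_mul (C : M4) (d : ℝ → M4) (v : M4) (t : ℝ)
    (hd : HasDerivAt d v t) :
    HasDerivAt (fun s => (d s * C).trace) ((v * C).trace) t := by
  exact (traceMulCLM C).hasFDerivAt.comp_hasDerivAt t hd

end Aux

/-- Cooper-field density evolution:
`Tr(d(t)·A↓A↑) = Tr(d(0)·A↓A↑)·exp(i·t·ν)` with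
`ν = 2(μ−λ) + γ·(1 − Re Tr(d(0)·(n↑+n↓)))`. -/
theorem cooper_field_evolution (Aup Adn : M4) (hCAR : CAR Aup Adn)
    (mu h lam gam : ℝ) (hgam : 0 ≤ gam)
    (d : ℝ → M4) (hd : SelfConsistent Aup Adn mu h lam gam d) :
    ∀ t : ℝ, (d t * (Adn * Aup)).trace
      = (d 0 * (Adn * Aup)).trace *
          Complex.exp (Complex.I * (t : ℂ) *
            ((2 * (mu - lam)
              + gam * (1 - ((d 0 * (Aupᴴ * Aup + Adnᴴ * Adn)).trace).re) : ℝ) : ℂ)) := by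
  obtain ⟨hdm, hder⟩ := hd
  set B : M4 := Adn * Aup with hB
  set N : M4 := Aupᴴ * Aup + Adnᴴ * Adn with hN
  set α : ℝ → ℂ := fun t => (d t * B).trace with hα
  set β : ℝ → ℂ := fun t => (d t * N).trace with hβ
  -- conjugate trace identity
  have hconj : ∀ t : ℝ, (d t * (Aupᴴ * Adnᴴ)).trace = starRingEnd ℂ (α t) := by
    intro t
    have hH : (d t)ᴴ = d t := (hdm t).1
    calc (d t * (Aupᴴ * Adnᴴ)).trace
        = ((Aupᴴ * Adnᴴ) * d t).trace := trace_mul_comm _ _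
      _ = ((d t * B)ᴴ).trace := by
          rw [conjTranspose_mul, hH, hB, conjTranspose_mul]
      _ = starRingEnd ℂ (α t) := by
          rw [trace_conjTranspose]; rfl
  -- β has zero derivative
  have hβ' : ∀ t : ℝ, HasDerivAt β 0 t := by
    intro t
    have hD := hasDerivAt_trace_mul N d _ t (hder t)
    have hval : (((-Complex.I) •
        (dh Aup Adn mu h lam gam (α t) * d t - d t * dh Aup Adn mu h lam gam (α t))) * N).trace
        = 0 := by
      rw [trace_comm_helper]
      rw [hN, commutatorN Aup Adn hCAR mu h lam gam (α t)]
      rw [mul_sub, mul_smul_comm, mul_smul_comm, trace_sub, trace_smul, trace_smul,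
        smul_eq_mul, smul_eq_mul]
      rw [show (d t * B).trace = α t from rfl, hconj t]
      ring
    rw [hval] at hD
    exact hD
  -- β is constant
  have hβconst : ∀ t : ℝ, β t = β 0 := by
    intro t
    exact is_const_of_deriv_eq_zero (fun x => (hβ' x).differentiableAt)
      (fun x => (hβ' x).deriv) t 0
  -- β 0 is real
  have hβ0 : β 0 = ((β 0).re : ℂ) := by
    have hH : (d 0)ᴴ = d 0 := (hdm 0).1
    have hNs : Nᴴ = N := by
      rw [hN, conjTranspose_add, conjTranspose_mul, conjTranspose_mul,
        conjTranspose_conjTranspose, conjTranspose_conjTranspose]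
    have : starRingEnd ℂ (β 0) = β 0 := by
      calc starRingEnd ℂ (β 0) = star ((d 0 * N).trace) := rfl
        _ = ((d 0 * N)ᴴ).trace := (trace_conjTranspose _).symm
        _ = (Nᴴ * (d 0)ᴴ).trace := by rw [conjTranspose_mul]
        _ = (N * d 0).trace := by rw [hNs, hH]
        _ = β 0 := trace_mul_comm _ _
    exact (Complex.conj_eq_iff_re.mp this).symm
  set ν : ℝ := 2 * (mu - lam) + gam * (1 - (β 0).re) with hν
  -- derivative of α
  have hα' : ∀ t : ℝ, HasDerivAt α ((Complex.I * ν) * α t) t := by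
    intro t
    have hD := hasDerivAt_trace_mul B d _ t (hder t)
    have hval : (((-Complex.I) •
        (dh Aup Adn mu h lam gam (α t) * d t - d t * dh Aup Adn mu h lam gam (α t))) * B).trace
        = (Complex.I * ν) * α t := by
      rw [trace_comm_helper]
      rw [hB, commutatorB Aup Adn hCAR mu h lam gam (α t)]
      simp only [mul_sub, mul_smul_comm, trace_sub, trace_smul, smul_eq_mul, mul_one]
      rw [(hdm t).2.2]
      rw [show (d t * B).trace = α t from rfl,
        show (d t * (Aupᴴ * Aup + Adnᴴ * Adn)).trace = β t from rfl,
        hβconst t, hβ0, hν]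
      push_cast
      ring
    rw [hval] at hD
    exact hD
  -- solve the ODE
  intro t
  have hg : ∀ s : ℝ, HasDerivAt (fun u : ℝ => α u * Complex.exp (-(Complex.I * ν) * u)) 0 s := by
    intro s
    have h2 : HasDerivAt (fun u : ℝ => Complex.exp (-(Complex.I * ν) * u))
        (Complex.exp (-(Complex.I * ν) * s) * (-(Complex.I * ν))) s := by
      have hs : HasDerivAt (fun u : ℝ => (-(Complex.I * ν) * u : ℂ)) (-(Complex.I * ν)) s := by
        simpa using (Complex.ofRealCLM.hasDerivAt (x := s)).const_mul (-(Complex.I * ν))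
      exact hs.cexp
    have := (hα' s).fun_mul h2
    exact this.congr_deriv (by ring)
  have hconst : ∀ s : ℝ, α s * Complex.exp (-(Complex.I * ν) * s) = α 0 := by
    intro s
    have := is_const_of_deriv_eq_zero (f := fun u : ℝ => α u * Complex.exp (-(Complex.I * ν) * u))
      (fun x => (hg x).differentiableAt) (fun x => (hg x).deriv) s 0
    simpa using this
  have hkey := hconst t
  have hmul := congrArg (· * Complex.exp (Complex.I * t * ν)) hkey
  beta_reduce at hmul
  rw [mul_assoc, ← Complex.exp_add,
    show -(Complex.I * (ν : ℂ)) * (t : ℂ) + Complex.I * (t : ℂ) * (ν : ℂ) = 0 by ring,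
    Complex.exp_zero, mul_one] at hmul
  exact hmul
end
end

section
/- Constancy of the Cooper-pair-condensate density for product initial states: if d : ℝ → M₄(ℂ) is a self-consistent trajectory, then κ(t) := |Tr(d(t)·A↓A↑)|² is independent of t ∈ ℝ, i.e. |Tr(d(t)·A↓A↑)| = |Tr(d(0)·A↓A↑)| for all t. -/
open Matrix
open scoped ComplexOrder

noncomputable section

/- ### Auxiliary lemmas -/

private lemma zz_aux {X : M4} (h : X + X = 0) : X = 0 := by
  have h2 : (2:ℂ) • X = 0 := by rw [two_smul]; exact h
  simpa using (smul_eq_zero.mp h2).resolve_left (by norm_num)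

/-- The key commutator identity `[dh(c), b] = (2μ−2λ)·b + γc·(1−N)`
where `b = A↓A↑` and `N = n↑+n↓`, a consequence of the CAR. -/
private lemma comm_key_s11 (Aup Adn : M4) (hCAR : CAR Aup Adn)
    (mu h lam gam : ℝ) (c : ℂ) :
    dh Aup Adn mu h lam gam c * (Adn * Aup) - (Adn * Aup) * dh Aup Adn mu h lam gam c
      = ((2*mu - 2*lam : ℂ)) • (Adn * Aup)
        + ((gam : ℂ) * c) • (1 - (Aupᴴ * Aup + Adnᴴ * Adn)) := by
  obtain ⟨c1, c2, c3, c4, c5, c6, c7⟩ := hCAR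
  have hAup2 : Aup * Aup = 0 := zz_aux c1
  have hAdn2 : Adn * Adn = 0 := zz_aux c3
  have hud : Aup * Adn = -(Adn * Aup) := eq_neg_of_add_eq_zero_left c2
  have h4 : Aup * Aupᴴ = 1 - Aupᴴ * Aup := eq_sub_of_add_eq c4
  have h5 : Aup * Adnᴴ = -(Adnᴴ * Aup) := eq_neg_of_add_eq_zero_left c5
  have h6 : Adn * Aupᴴ = -(Aupᴴ * Adn) := eq_neg_of_add_eq_zero_left c6
  have h7 : Adn * Adnᴴ = 1 - Adnᴴ * Adn := eq_sub_of_add_eq c7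
  have i1 : Aupᴴ * Aup * (Adn * Aup) = 0 := by
    calc Aupᴴ * Aup * (Adn * Aup) = Aupᴴ * ((Aup * Adn) * Aup) := by noncomm_ring
      _ = Aupᴴ * (-(Adn * Aup) * Aup) := by rw [hud]
      _ = -(Aupᴴ * Adn * (Aup * Aup)) := by noncomm_ring
      _ = 0 := by rw [hAup2]; noncomm_ring
  have i2 : Adnᴴ * Adn * (Adn * Aup) = 0 := by
    calc Adnᴴ * Adn * (Adn * Aup) = Adnᴴ * ((Adn * Adn) * Aup) := by noncomm_ring
      _ = 0 := by rw [hAdn2]; noncomm_ring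
  have i3 : (Adn * Aup) * (Aupᴴ * Aup) = Adn * Aup := by
    calc (Adn * Aup) * (Aupᴴ * Aup) = Adn * ((Aup * Aupᴴ) * Aup) := by noncomm_ring
      _ = Adn * ((1 - Aupᴴ * Aup) * Aup) := by rw [h4]
      _ = Adn * Aup - Adn * Aupᴴ * (Aup * Aup) := by noncomm_ring
      _ = Adn * Aup := by rw [hAup2]; noncomm_ring
  have i4 : (Adn * Aup) * (Adnᴴ * Adn) = Adn * Aup := by
    calc (Adn * Aup) * (Adnᴴ * Adn) = Adn * ((Aup * Adnᴴ) * Adn) := by noncomm_ring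
      _ = Adn * (-(Adnᴴ * Aup) * Adn) := by rw [h5]
      _ = -((Adn * Adnᴴ) * ((Aup * Adn))) := by noncomm_ring
      _ = -((1 - Adnᴴ * Adn) * (-(Adn * Aup))) := by rw [h7, hud]
      _ = Adn * Aup - Adnᴴ * ((Adn * Adn) * Aup) := by noncomm_ring
      _ = Adn * Aup := by rw [hAdn2]; noncomm_ring
  have i5 : Aupᴴ * Aup * (Adnᴴ * Adn) * (Adn * Aup) = 0 := by
    calc Aupᴴ * Aup * (Adnᴴ * Adn) * (Adn * Aup)
        = Aupᴴ * Aup * (Adnᴴ * Adn * (Adn * Aup)) := by noncomm_ring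
      _ = 0 := by rw [i2]; noncomm_ring
  have i6 : (Adn * Aup) * (Aupᴴ * Aup * (Adnᴴ * Adn)) = Adn * Aup := by
    calc (Adn * Aup) * (Aupᴴ * Aup * (Adnᴴ * Adn))
        = ((Adn * Aup) * (Aupᴴ * Aup)) * (Adnᴴ * Adn) := by noncomm_ring
      _ = Adn * Aup := by rw [i3, i4]
  have i7 : (Adn * Aup) * (Aupᴴ * Adnᴴ)
      = 1 - Aupᴴ * Aup - Adnᴴ * Adn + (Aupᴴ * Adnᴴ) * (Adn * Aup) := by
    calc (Adn * Aup) * (Aupᴴ * Adnᴴ) = Adn * ((Aup * Aupᴴ) * Adnᴴ) := by noncomm_ring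
      _ = Adn * ((1 - Aupᴴ * Aup) * Adnᴴ) := by rw [h4]
      _ = Adn * Adnᴴ - (Adn * Aupᴴ) * (Aup * Adnᴴ) := by noncomm_ring
      _ = (1 - Adnᴴ * Adn) - (-(Aupᴴ * Adn)) * (-(Adnᴴ * Aup)) := by rw [h7, h6, h5]
      _ = 1 - Adnᴴ * Adn - Aupᴴ * ((Adn * Adnᴴ) * Aup) := by noncomm_ring
      _ = 1 - Adnᴴ * Adn - Aupᴴ * ((1 - Adnᴴ * Adn) * Aup) := by rw [h7]
      _ = 1 - Aupᴴ * Aup - Adnᴴ * Adn + (Aupᴴ * Adnᴴ) * (Adn * Aup) := by noncomm_ring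
  simp only [dh, sub_mul, mul_sub, add_mul, mul_add, smul_mul_assoc, mul_smul_comm,
    i1, i2, i3, i4, i5, i6, i7]
  module

/-- The continuous `ℝ`-linear map `X ↦ Tr(X·b)` on `M₄(ℂ)`. -/
private def traceRight (b : M4) : M4 →L[ℝ] ℂ :=
  LinearMap.toContinuousLinearMap
    { toFun := fun X => (X * b).trace
      map_add' := fun X Y => by simp [add_mul]
      map_smul' := fun r X => by simp [smul_mul_assoc] }

private lemma traceRight_apply (b X : M4) : traceRight b X = (X * b).trace := rfl

/-- constancy of the Cooper-pair-condensate density: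
`|Tr(d(t)·A↓A↑)| = |Tr(d(0)·A↓A↑)|` for all `t`. -/
theorem cooper_condensate_density_constant (Aup Adn : M4) (hCAR : CAR Aup Adn)
    (mu h lam gam : ℝ) (hgam : 0 ≤ gam)
    (d : ℝ → M4) (hd : SelfConsistent Aup Adn mu h lam gam d) :
    ∀ t : ℝ, ‖(d t * (Adn * Aup)).trace‖
      = ‖(d 0 * (Adn * Aup)).trace‖ := by
  obtain ⟨hden, hderiv⟩ := hd
  set b : M4 := Adn * Aup with hb
  set N : M4 := Aupᴴ * Aup + Adnᴴ * Adn with hN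
  set α : ℝ → ℂ := fun t => ((d t) * b).trace with hα
  -- N is Hermitian
  have hNH : Nᴴ = N := by
    simp [hN, conjTranspose_add, conjTranspose_mul]
  -- s t is a real quantity
  set s : ℝ → ℂ := fun t => (2*mu - 2*lam : ℂ) + gam * (1 - ((d t) * N).trace) with hs
  have hsreal : ∀ t, (starRingEnd ℂ) (s t) = s t := by
    intro t
    have htr : (starRingEnd ℂ) (((d t) * N).trace) = ((d t) * N).trace := by
      have h1 : (((d t) * N)ᴴ).trace = star (((d t) * N).trace) :=
        Matrix.trace_conjTranspose _
      have h2 : ((d t) * N)ᴴ = N * (d t) := by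
        rw [conjTranspose_mul, hNH, (hden t).1]
      rw [h2, Matrix.trace_mul_comm] at h1
      exact h1.symm
    simp only [hs, map_add, map_sub, _root_.map_mul, map_ofNat, _root_.map_one, htr, Complex.conj_ofReal]
  -- the derivative of α
  have hα' : ∀ t, HasDerivAt α (Complex.I * s t * α t) t := by
    intro t
    have hD := hderiv t
    have hL := HasFDerivAt.comp_hasDerivAt t ((traceRight b).hasFDerivAt) hD
    have hLval : traceRight b
        ((-Complex.I) •
          (dh Aup Adn mu h lam gam (α t) * d t - d t * dh Aup Adn mu h lam gam (α t)))
        = Complex.I * s t * α t := by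
      set H : M4 := dh Aup Adn mu h lam gam (α t) with hH
      rw [traceRight_apply]
      have e1 : ((-Complex.I) • (H * d t - d t * H)) * b
          = (-Complex.I) • ((H * d t - d t * H) * b) := by
        rw [smul_mul_assoc]
      rw [e1, Matrix.trace_smul]
      have e2 : ((H * d t - d t * H) * b).trace
          = ((d t) * (b * H - H * b)).trace := by
        rw [sub_mul, Matrix.trace_sub, mul_sub, Matrix.trace_sub]
        congr 1
        · rw [mul_assoc, Matrix.trace_mul_comm H (d t * b), mul_assoc]
        · rw [mul_assoc]
      have e3 : b * H - H * b
          = -(((2*mu - 2*lam : ℂ)) • b + ((gam : ℂ) * (α t)) • (1 - N)) := by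
        have := comm_key_s11 Aup Adn hCAR mu h lam gam (α t)
        rw [← hH, ← hb, ← hN] at this
        rw [← this]; abel
      rw [e2, e3]
      have e4 : ((d t) * -(((2*mu - 2*lam : ℂ)) • b + ((gam : ℂ) * (α t)) • (1 - N))).trace
          = -(((2*mu - 2*lam : ℂ)) * α t + ((gam : ℂ) * (α t)) * (1 - ((d t) * N).trace)) := by
        have htr1 : ((d t) * (1 - N)).trace = 1 - ((d t) * N).trace := by
          rw [mul_sub, mul_one, Matrix.trace_sub, (hden t).2.2]
        rw [mul_neg, Matrix.trace_neg, mul_add, Matrix.trace_add,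
          mul_smul_comm, mul_smul_comm, Matrix.trace_smul, Matrix.trace_smul,
          htr1]
        simp [hα, smul_eq_mul]
      rw [e4]
      simp only [hs, smul_eq_mul]
      ring
    rw [← hLval]
    exact hL
  -- g = |α|² (as a complex number) has zero derivative
  set g : ℝ → ℂ := fun t => α t * (starRingEnd ℂ) (α t) with hg
  have hconj : ∀ t, HasDerivAt (fun u => (starRingEnd ℂ) (α u))
      ((starRingEnd ℂ) (Complex.I * s t * α t)) t := by
    intro t
    have := HasFDerivAt.comp_hasDerivAt t
      (Complex.conjCLE.toContinuousLinearMap.hasFDerivAt) (hα' t)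
    exact this
  have hg' : ∀ t, HasDerivAt g 0 t := by
    intro t
    have := (hα' t).mul (hconj t)
    have hval : Complex.I * s t * α t * (starRingEnd ℂ) (α t)
        + α t * (starRingEnd ℂ) (Complex.I * s t * α t) = 0 := by
      simp only [_root_.map_mul, Complex.conj_I, hsreal t]
      ring
    rw [hval] at this
    exact this
  have hgconst : ∀ t, g t = g 0 := by
    intro t
    exact is_const_of_deriv_eq_zero (fun u => (hg' u).differentiableAt)
      (fun u => (hg' u).deriv) t 0
  intro t
  have hnsq : (Complex.normSq (α t) : ℂ) = (Complex.normSq (α 0) : ℂ) := by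
    rw [← Complex.mul_conj, ← Complex.mul_conj]
    exact hgconst t
  have hnsq' : Complex.normSq (α t) = Complex.normSq (α 0) := by
    exact_mod_cast hnsq
  show ‖α t‖ = ‖α 0‖
  rw [Complex.norm_def, Complex.norm_def, hnsq']
end
end

section
/- Non-constancy of the Cooper-pair-condensate density for non-pure phases: let u₁, u₂ ∈ (0,1), r₁, r₂ > 0, θ₁, θ₂ ∈ ℝ, and ν₁, ν₂ ∈ ℝ with ν₁ ≠ ν₂. Then the function t ↦ |u₁·r₁·exp(i(t·ν₁ + θ₁)) + u₂·r₂·exp(i(t·ν₂ + θ₂))|² of t ∈ ℝ is not a constant function. -/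
/-- non-constancy of the Cooper-pair-condensate density for
non-pure phases: for `u₁, u₂ ∈ (0,1)`, `r₁, r₂ > 0`, `θ₁, θ₂ ∈ ℝ` and
`ν₁ ≠ ν₂`, the function
`t ↦ |u₁·r₁·exp(i(t·ν₁ + θ₁)) + u₂·r₂·exp(i(t·ν₂ + θ₂))|²` is not constant. -/
theorem condensate_density_not_constant
    (u₁ u₂ r₁ r₂ θ₁ θ₂ ν₁ ν₂ : ℝ)
    (hu₁ : u₁ ∈ Set.Ioo (0 : ℝ) 1) (hu₂ : u₂ ∈ Set.Ioo (0 : ℝ) 1)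
    (hr₁ : 0 < r₁) (hr₂ : 0 < r₂) (hν : ν₁ ≠ ν₂) :
    ¬ ∃ C : ℝ, ∀ t : ℝ,
      (‖((u₁ : ℂ) * (r₁ : ℂ) * Complex.exp (Complex.I * ((t * ν₁ + θ₁ : ℝ) : ℂ))
        + (u₂ : ℂ) * (r₂ : ℂ) * Complex.exp (Complex.I * ((t * ν₂ + θ₂ : ℝ) : ℂ)))‖) ^ 2 = C := by
  obtain ⟨hu₁0, _⟩ := hu₁
  obtain ⟨hu₂0, _⟩ := hu₂
  rintro ⟨C, hC⟩
  have hδ : ν₁ - ν₂ ≠ 0 := sub_ne_zero.mpr hν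
  set t₁ : ℝ := (θ₂ - θ₁) / (ν₁ - ν₂) with ht₁
  set t₂ : ℝ := (Real.pi + θ₂ - θ₁) / (ν₁ - ν₂) with ht₂
  have e1 : t₁ * ν₁ + θ₁ = t₁ * ν₂ + θ₂ := by
    rw [ht₁]; field_simp; ring
  have e2 : t₂ * ν₁ + θ₁ = (t₂ * ν₂ + θ₂) + Real.pi := by
    rw [ht₂]; field_simp; ring
  have h1 := hC t₁
  have h2 := hC t₂
  rw [e1] at h1
  rw [e2] at h2
  have habs : ∀ x : ℝ, ‖Complex.exp (Complex.I * (x : ℂ))‖ = 1 := by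
    intro x
    rw [mul_comm, Complex.norm_exp_ofReal_mul_I]
  -- compute h1
  have key1 : ‖(u₁ : ℂ) * (r₁ : ℂ) * Complex.exp (Complex.I * ((t₁ * ν₂ + θ₂ : ℝ) : ℂ))
      + (u₂ : ℂ) * (r₂ : ℂ) * Complex.exp (Complex.I * ((t₁ * ν₂ + θ₂ : ℝ) : ℂ))‖
      = |u₁ * r₁ + u₂ * r₂| := by
    rw [← add_mul, norm_mul, habs, mul_one]
    rw [show ((u₁:ℂ)*r₁ + (u₂:ℂ)*r₂) = ((u₁*r₁ + u₂*r₂ : ℝ) : ℂ) by push_cast; ring]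
    rw [Complex.norm_real, Real.norm_eq_abs]
  -- compute h2
  have key2 : ‖(u₁ : ℂ) * (r₁ : ℂ) * Complex.exp (Complex.I * (((t₂ * ν₂ + θ₂) + Real.pi : ℝ) : ℂ))
      + (u₂ : ℂ) * (r₂ : ℂ) * Complex.exp (Complex.I * ((t₂ * ν₂ + θ₂ : ℝ) : ℂ))‖
      = |u₂ * r₂ - u₁ * r₁| := by
    have : Complex.exp (Complex.I * (((t₂ * ν₂ + θ₂) + Real.pi : ℝ) : ℂ))
        = - Complex.exp (Complex.I * ((t₂ * ν₂ + θ₂ : ℝ) : ℂ)) := by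
      rw [show (Complex.I * (((t₂ * ν₂ + θ₂) + Real.pi : ℝ) : ℂ))
          = Complex.I * ((t₂ * ν₂ + θ₂ : ℝ) : ℂ) + Real.pi * Complex.I by push_cast; ring]
      rw [Complex.exp_add, Complex.exp_pi_mul_I]
      ring
    rw [this]
    rw [show ((u₁:ℂ)*r₁ * -Complex.exp (Complex.I * ((t₂ * ν₂ + θ₂ : ℝ) : ℂ))
        + (u₂:ℂ)*r₂ * Complex.exp (Complex.I * ((t₂ * ν₂ + θ₂ : ℝ) : ℂ)))
        = ((u₂*r₂ - u₁*r₁ : ℝ) : ℂ) * Complex.exp (Complex.I * ((t₂ * ν₂ + θ₂ : ℝ) : ℂ)) by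
      push_cast; ring]
    rw [norm_mul, habs, mul_one, Complex.norm_real, Real.norm_eq_abs]
  rw [key1, sq_abs] at h1
  rw [key2, sq_abs] at h2
  nlinarith [mul_pos (mul_pos hu₁0 hr₁) (mul_pos hu₂0 hr₂)]
end

section
/- Evenness (parity) preservation by the self-consistent flow: let P := (1 − 2n↑)·(1 − 2n↓) ∈ M₄(ℂ) be the parity operator, and let d : ℝ → M₄(ℂ) be a self-consistent trajectory such that P·d(0)·P = d(0). Then P·d(t)·P = d(t) for every t ∈ ℝ. -/
open Matrix
open scoped ComplexOrder

noncomputable section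

/-- We also register the `ℂ`-normed-space structure (for norm computations). -/
noncomputable instance : NormedSpace ℂ M4 := Matrix.normedSpace

/-- The parity operator `P := (1 − 2n↑)·(1 − 2n↓)`. -/
def parity (Aup Adn : M4) : M4 :=
  ((1 : M4) - (2 : ℂ) • (Aupᴴ * Aup)) * ((1 : M4) - (2 : ℂ) • (Adnᴴ * Adn))

/-- The entrywise sup norm on `M4` satisfies `‖A*B‖ ≤ 4‖A‖‖B‖`. -/
lemma M4.norm_mul_le (A B : M4) : ‖A * B‖ ≤ 4 * (‖A‖ * ‖B‖) := by
  have h0 : (0:ℝ) ≤ 4 * (‖A‖ * ‖B‖) := by positivity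
  rw [Matrix.norm_le_iff h0]
  intro i j
  rw [Matrix.mul_apply]
  calc ‖∑ k, A i k * B k j‖ ≤ ∑ k, ‖A i k * B k j‖ := norm_sum_le _ _
    _ ≤ ∑ _k : Fin 4, ‖A‖ * ‖B‖ := by
        refine Finset.sum_le_sum fun k _ => ?_
        rw [norm_mul]
        exact mul_le_mul (Matrix.norm_entry_le_entrywise_sup_norm A)
          (Matrix.norm_entry_le_entrywise_sup_norm B) (norm_nonneg _) (norm_nonneg _)
    _ = 4 * (‖A‖ * ‖B‖) := by simp [Finset.sum_const]

/-- The conjugation map `x ↦ P x P` as a continuous linear map. -/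
def conjCLM (P : M4) : M4 →L[ℝ] M4 :=
  LinearMap.toContinuousLinearMap
    { toFun := fun x => P * x * P
      map_add' := fun x y => by noncomm_ring
      map_smul' := fun r x => by
        simp [Matrix.mul_smul, Matrix.smul_mul] }

/-- evenness (parity) preservation by the self-consistent flow:
if `P·d(0)·P = d(0)` then `P·d(t)·P = d(t)` for every `t`. -/
theorem parity_preserved (Aup Adn : M4) (hCAR : CAR Aup Adn)
    (mu h lam gam : ℝ) (hgam : 0 ≤ gam)
    (d : ℝ → M4) (hd : SelfConsistent Aup Adn mu h lam gam d)
    (h0 : parity Aup Adn * d 0 * parity Aup Adn = d 0) :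
    ∀ t : ℝ, parity Aup Adn * d t * parity Aup Adn = d t := by
  obtain ⟨h1, h2, h3, h4, h5, h6, h7⟩ := hCAR
  obtain ⟨hdens, hderiv⟩ := hd
  set P : M4 := parity Aup Adn with hP
  -- basic CAR consequences
  have e1 : Aup * Aup = 0 := by
    have : (2:ℂ) • (Aup * Aup) = 0 := by rw [two_smul]; exact h1
    simpa using this
  have e3 : Adn * Adn = 0 := by
    have : (2:ℂ) • (Adn * Adn) = 0 := by rw [two_smul]; exact h3
    simpa using this
  have e1' : Aupᴴ * Aupᴴ = 0 := by
    have := congrArg conjTranspose e1; simpa using this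
  have e3' : Adnᴴ * Adnᴴ = 0 := by
    have := congrArg conjTranspose e3; simpa using this
  have a2 : Aup * Adn = -(Adn * Aup) := eq_neg_of_add_eq_zero_left h2
  have a4 : Aup * Aupᴴ = 1 - Aupᴴ * Aup := eq_sub_of_add_eq h4
  have a5 : Aup * Adnᴴ = -(Adnᴴ * Aup) := eq_neg_of_add_eq_zero_left h5
  have a6 : Adn * Aupᴴ = -(Aupᴴ * Adn) := eq_neg_of_add_eq_zero_left h6
  have a7 : Adn * Adnᴴ = 1 - Adnᴴ * Adn := eq_sub_of_add_eq h7
  have a2' : Adnᴴ * Aupᴴ = -(Aupᴴ * Adnᴴ) := by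
    have := congrArg conjTranspose a2
    rw [conjTranspose_mul, conjTranspose_neg, conjTranspose_mul] at this
    exact this
  have e1a : ∀ x : M4, Aup * (Aup * x) = 0 := fun x => by rw [← mul_assoc, e1, zero_mul]
  have e3a : ∀ x : M4, Adn * (Adn * x) = 0 := fun x => by rw [← mul_assoc, e3, zero_mul]
  have e1'a : ∀ x : M4, Aupᴴ * (Aupᴴ * x) = 0 := fun x => by rw [← mul_assoc, e1', zero_mul]
  have e3'a : ∀ x : M4, Adnᴴ * (Adnᴴ * x) = 0 := fun x => by rw [← mul_assoc, e3', zero_mul]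
  have a2a : ∀ x : M4, Aup * (Adn * x) = -(Adn * (Aup * x)) := fun x => by
    rw [← mul_assoc, a2, neg_mul, mul_assoc]
  have a4a : ∀ x : M4, Aup * (Aupᴴ * x) = x - Aupᴴ * (Aup * x) := fun x => by
    rw [← mul_assoc, a4, sub_mul, one_mul, mul_assoc]
  have a5a : ∀ x : M4, Aup * (Adnᴴ * x) = -(Adnᴴ * (Aup * x)) := fun x => by
    rw [← mul_assoc, a5, neg_mul, mul_assoc]
  have a6a : ∀ x : M4, Adn * (Aupᴴ * x) = -(Aupᴴ * (Adn * x)) := fun x => by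
    rw [← mul_assoc, a6, neg_mul, mul_assoc]
  have a7a : ∀ x : M4, Adn * (Adnᴴ * x) = x - Adnᴴ * (Adn * x) := fun x => by
    rw [← mul_assoc, a7, sub_mul, one_mul, mul_assoc]
  have a2'a : ∀ x : M4, Adnᴴ * (Aupᴴ * x) = -(Aupᴴ * (Adnᴴ * x)) := fun x => by
    rw [← mul_assoc, a2', neg_mul, mul_assoc]
  have hPP : P * P = 1 := by
    simp only [hP, parity, mul_assoc, mul_sub, sub_mul, mul_add, add_mul,
      smul_mul_assoc, mul_smul_comm, smul_smul, smul_sub, smul_add, smul_zero,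
      e1, e3, e1', e3', a2, a4, a5, a6, a7, a2',
      e1a, e3a, e1'a, e3'a, a2a, a4a, a5a, a6a, a7a, a2'a,
      mul_neg, neg_mul, neg_neg, mul_zero, zero_mul, mul_one, one_mul, smul_neg]
    module
  have hPH : ∀ c : ℂ, P * dh Aup Adn mu h lam gam c = dh Aup Adn mu h lam gam c * P := by
    intro c
    simp only [hP, parity, dh, mul_assoc, mul_sub, sub_mul, mul_add, add_mul,
      smul_mul_assoc, mul_smul_comm, smul_smul, smul_sub, smul_add, smul_zero,
      e1, e3, e1', e3', a2, a4, a5, a6, a7, a2',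
      e1a, e3a, e1'a, e3'a, a2a, a4a, a5a, a6a, a7a, a2'a,
      mul_neg, neg_mul, neg_neg, mul_zero, zero_mul, mul_one, one_mul, smul_neg]
    module
  -- the (time-dependent, linear) Hamiltonian along the trajectory
  set H : ℝ → M4 := fun t => dh Aup Adn mu h lam gam ((d t * (Adn * Aup)).trace) with hHdef
  have hcont : Continuous d := by
    rw [continuous_iff_continuousAt]; exact fun t => (hderiv t).continuousAt
  have hctrace : Continuous fun t => ((d t * (Adn * Aup)).trace) :=
    (hcont.matrix_mul continuous_const).matrix_trace
  have hHcont : Continuous H := by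
    rw [hHdef]
    simp only [dh]
    refine (Continuous.sub (Continuous.sub ?_ ?_) ?_)
    · exact (continuous_const.sub continuous_const)
    · exact continuous_const
    · exact (continuous_const : Continuous fun _ : ℝ => (gam : ℂ)).smul
        ((hctrace.smul (continuous_const : Continuous fun _ : ℝ => Aupᴴ * Adnᴴ)).add
          (((Complex.continuous_conj).comp hctrace).smul (continuous_const : Continuous fun _ : ℝ => Adn * Aup)))
  -- the trajectory of conjugated densities
  set f : ℝ → M4 := fun t => P * d t * P with hfdef
  have hPH' : ∀ u : ℝ, P * H u = H u * P := fun u => hPH _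
  have hfderiv : ∀ t : ℝ, HasDerivAt f
      ((-Complex.I) • (H t * f t - f t * H t)) t := by
    intro t
    have hL := ((conjCLM P).hasFDerivAt
      (x := d t)).comp_hasDerivAt t (hderiv t)
    have hkey : conjCLM P ((-Complex.I) • (H t * d t - d t * H t))
        = (-Complex.I) • (H t * f t - f t * H t) := by
      show P * ((-Complex.I) • (H t * d t - d t * H t)) * P = _
      rw [Matrix.mul_smul, Matrix.smul_mul]
      congr 1
      calc P * (H t * d t - d t * H t) * P
          = (P * H t) * (d t * P) - P * d t * (H t * P) := by noncomm_ring
        _ = (H t * P) * (d t * P) - P * d t * (P * H t) := by rw [hPH' t]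
        _ = H t * (P * d t * P) - (P * d t * P) * H t := by noncomm_ring
    rw [← hkey]
    exact hL
  -- prove equality of f and d on a compact interval around 0 via ODE uniqueness
  intro t
  have habs : 0 ≤ |t| := abs_nonneg t
  have hab0 : (0:ℝ) ∈ Set.Ioo (-(|t| + 1)) (|t| + 1) := by
    constructor <;> [linarith; linarith]
  have htmem : t ∈ Set.Icc (-(|t| + 1)) (|t| + 1) := by
    constructor
    · linarith [neg_abs_le t]
    · linarith [le_abs_self t]
  obtain ⟨C, hC⟩ := isCompact_Icc.exists_bound_of_continuousOn
    (s := Set.Icc (-(|t| + 1)) (|t| + 1)) hHcont.continuousOn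
  have hC0 : 0 ≤ C := le_trans (norm_nonneg _) (hC 0 (Set.mem_Icc_of_Ioo hab0))
  set K : NNReal := (8 * C).toNNReal with hKdef
  set v : ℝ → M4 → M4 := fun s x => (-Complex.I) • (H s * x - x * H s) with hvdef
  set S : ℝ → Set M4 := fun s =>
    if s ∈ Set.Icc (-(|t| + 1)) (|t| + 1) then Set.univ else {0} with hSdef
  have hv : ∀ s : ℝ, LipschitzOnWith K (v s) (S s) := by
    intro s
    by_cases hs : s ∈ Set.Icc (-(|t| + 1)) (|t| + 1)
    · rw [hSdef]
      simp only [if_pos hs]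
      refine LipschitzOnWith.of_dist_le_mul fun x _ y _ => ?_
      rw [dist_eq_norm, dist_eq_norm]
      have hsub : v s x - v s y
          = (-Complex.I) • (H s * (x - y) - (x - y) * H s) := by
        simp only [hvdef, mul_sub, sub_mul, smul_sub]
        abel
      rw [hsub, norm_smul]
      have hI : ‖(-Complex.I)‖ = 1 := by simp
      rw [hI, one_mul]
      have b1 : ‖H s * (x - y) - (x - y) * H s‖
          ≤ ‖H s * (x - y)‖ + ‖(x - y) * H s‖ := norm_sub_le _ _
      have b2 : ‖H s * (x - y)‖ ≤ 4 * (‖H s‖ * ‖x - y‖) := M4.norm_mul_le _ _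
      have b3 : ‖(x - y) * H s‖ ≤ 4 * (‖x - y‖ * ‖H s‖) := M4.norm_mul_le _ _
      have hHs : ‖H s‖ ≤ C := hC s hs
      have hKval : (K : ℝ) = 8 * C := by
        rw [hKdef, Real.coe_toNNReal]; positivity
      rw [hKval]
      nlinarith [norm_nonneg (x - y), norm_nonneg (H s)]
    · rw [hSdef]
      simp only [if_neg hs]
      refine LipschitzOnWith.of_dist_le_mul fun x hx y hy => ?_
      rw [Set.mem_singleton_iff] at hx hy
      subst hx; subst hy
      simp
  have heqon := ODE_solution_unique_of_mem_Icc (v := v) (s := S) (K := K)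
    (fun s _ => hv s) hab0
    (continuous_iff_continuousAt.mpr fun u => (hfderiv u).continuousAt).continuousOn
    (fun u _ => hfderiv u)
    (fun u hu => by
      rw [hSdef]
      simp only [if_pos (Set.mem_Icc_of_Ioo hu)]
      trivial)
    hcont.continuousOn
    (fun u _ => hderiv u)
    (fun u hu => by
      rw [hSdef]
      simp only [if_pos (Set.mem_Icc_of_Ioo hu)]
      trivial)
    h0
  exact heqon htmem
end
end
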